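/- The interval system 𝐀x = 𝐛 is strongly solvable (for every A ∈ 𝐀, b ∈ 𝐛 there is x with Ax = b) if and only if for every sign vector s ∈ {±1}^m the real system (A_c + diag(s)A_Δ)x¹ − (A_c − diag(s)A_Δ)x² = b_c − diag(s)b_Δ, x¹, x² ≥ 0 is solvable. -/

import Mathlib

open Matrix Finset

lemma myFarkas : ∀ (k : ℕ) {m : ℕ} (v : Fin k → (Fin m → ℝ)) (d : Fin m → ℝ),
    (¬ ∃ c : Fin k → ℝ, (∀ i, 0 ≤ c i) ∧ ∑ i, c i • v i = d) →
    ∃ p : Fin m → ℝ, (∀ i, 0 ≤ v i ⬝ᵥ p) ∧ d ⬝ᵥ p < 0 := by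
  intro k
  induction k with
  | zero =>
    intro m v d h
    have hd : d ≠ 0 := by
      rintro rfl
      exact h ⟨0, fun i => le_refl 0, by simp⟩
    refine ⟨-d, fun i => i.elim0, ?_⟩
    have h1 : d ⬝ᵥ d ≠ 0 := fun h0 => hd ((dotProduct_self_eq_zero).mp h0)
    have h2 : 0 ≤ d ⬝ᵥ d := Finset.sum_nonneg fun i _ => mul_self_nonneg _
    have : 0 < d ⬝ᵥ d := lt_of_le_of_ne h2 (Ne.symm h1)
    simpa [dotProduct_neg] using this
  | succ k ih =>
    intro m v d h
    set v' : Fin k → (Fin m → ℝ) := fun i => v i.castSucc with hv'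
    set u : Fin m → ℝ := v (Fin.last k) with hu
    have h' : ¬ ∃ c : Fin k → ℝ, (∀ i, 0 ≤ c i) ∧ ∑ i, c i • v' i = d := by
      rintro ⟨c, hc, hsum⟩
      refine h ⟨Fin.snoc c 0, fun i => ?_, ?_⟩
      · refine Fin.lastCases ?_ ?_ i <;> simp [hc]
      · rw [Fin.sum_univ_castSucc]
        simpa using hsum
    obtain ⟨p, hp1, hp2⟩ := ih v' d h'
    by_cases hup : 0 ≤ u ⬝ᵥ p
    · refine ⟨p, fun i => ?_, hp2⟩
      refine Fin.lastCases ?_ ?_ i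
      · exact hup
      · exact hp1
    · push_neg at hup
      have hupne : u ⬝ᵥ p ≠ 0 := ne_of_lt hup
      set w : Fin k → (Fin m → ℝ) := fun i => v' i - ((v' i ⬝ᵥ p) / (u ⬝ᵥ p)) • u with hw
      set d' : Fin m → ℝ := d - ((d ⬝ᵥ p) / (u ⬝ᵥ p)) • u with hd'
      have hno : ¬ ∃ c : Fin k → ℝ, (∀ i, 0 ≤ c i) ∧ ∑ i, c i • w i = d' := by
        rintro ⟨c, hc, hsum⟩
        have hμ0 : 0 ≤ (d ⬝ᵥ p) / (u ⬝ᵥ p) - ∑ i, c i * ((v' i ⬝ᵥ p) / (u ⬝ᵥ p)) := by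
          have h1 : 0 < (d ⬝ᵥ p) / (u ⬝ᵥ p) := div_pos_of_neg_of_neg hp2 hup
          have h2 : ∑ i, c i * ((v' i ⬝ᵥ p) / (u ⬝ᵥ p)) ≤ 0 := by
            refine Finset.sum_nonpos fun i _ => ?_
            exact mul_nonpos_of_nonneg_of_nonpos (hc i)
              (div_nonpos_of_nonneg_of_nonpos (hp1 i) (le_of_lt hup))
          linarith
        have expand : ∑ i, c i • w i
            = ∑ i, c i • v' i - (∑ i, c i * ((v' i ⬝ᵥ p) / (u ⬝ᵥ p))) • u := by
          rw [Finset.sum_smul, ← Finset.sum_sub_distrib]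
          refine Finset.sum_congr rfl fun i _ => ?_
          simp [hw, smul_sub, smul_smul]
        have keyeq : ∑ i, c i • v' i
            = d - ((d ⬝ᵥ p) / (u ⬝ᵥ p)) • u + (∑ i, c i * ((v' i ⬝ᵥ p) / (u ⬝ᵥ p))) • u := by
          have h3 := hsum
          rw [expand, hd', sub_eq_iff_eq_add] at h3
          rw [h3]
        refine h ⟨Fin.snoc c ((d ⬝ᵥ p) / (u ⬝ᵥ p) - ∑ i, c i * ((v' i ⬝ᵥ p) / (u ⬝ᵥ p))),
          fun i => ?_, ?_⟩
        · refine Fin.lastCases ?_ ?_ i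
          · simpa using hμ0
          · intro i; simpa using hc i
        · rw [Fin.sum_univ_castSucc]
          simp only [Fin.snoc_castSucc, Fin.snoc_last,
            show ∀ i : Fin k, v i.castSucc = v' i from fun i => rfl, ← hu]
          rw [keyeq, sub_smul]
          abel
      obtain ⟨q, hq1, hq2⟩ := ih w d' hno
      refine ⟨q - ((u ⬝ᵥ q) / (u ⬝ᵥ p)) • p, fun i => ?_, ?_⟩
      · refine Fin.lastCases ?_ ?_ i
        · show (0:ℝ) ≤ u ⬝ᵥ (q - ((u ⬝ᵥ q) / (u ⬝ᵥ p)) • p)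
          rw [dotProduct_sub, dotProduct_smul, smul_eq_mul, div_mul_cancel₀ _ hupne, sub_self]
        · intro i
          show (0:ℝ) ≤ v' i ⬝ᵥ (q - ((u ⬝ᵥ q) / (u ⬝ᵥ p)) • p)
          have heq : v' i ⬝ᵥ (q - ((u ⬝ᵥ q) / (u ⬝ᵥ p)) • p) = w i ⬝ᵥ q := by
            simp only [hw, dotProduct_sub, dotProduct_smul, sub_dotProduct,
              smul_dotProduct, smul_eq_mul]
            field_simp
          rw [heq]
          exact hq1 i
      · have heq : d ⬝ᵥ (q - ((u ⬝ᵥ q) / (u ⬝ᵥ p)) • p) = d' ⬝ᵥ q := by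
          simp only [hd', dotProduct_sub, dotProduct_smul, sub_dotProduct,
            smul_dotProduct, smul_eq_mul]
          field_simp
        rw [heq]
        exact hq2

lemma myKey {m n : ℕ} (B C : Matrix (Fin m) (Fin n) ℝ) (d : Fin m → ℝ)
    (h : ¬ ∃ x1 x2 : Fin n → ℝ, (∀ j, 0 ≤ x1 j) ∧ (∀ j, 0 ≤ x2 j) ∧
      B.mulVec x1 - C.mulVec x2 = d) :
    ∃ p : Fin m → ℝ, (∀ j, 0 ≤ ∑ i, B i j * p i) ∧ (∀ j, ∑ i, C i j * p i ≤ 0) ∧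
      d ⬝ᵥ p < 0 := by
  set v : Fin (n + n) → (Fin m → ℝ) :=
    Fin.append (fun j i => B i j) (fun j i => -C i j) with hv
  have hnc : ¬ ∃ c : Fin (n + n) → ℝ, (∀ i, 0 ≤ c i) ∧ ∑ i, c i • v i = d := by
    rintro ⟨c, hc, hsum⟩
    refine h ⟨fun j => c (Fin.castAdd n j), fun j => c (Fin.natAdd n j),
      fun j => hc _, fun j => hc _, ?_⟩
    funext i
    have := congrFun hsum i
    rw [Finset.sum_apply] at this
    rw [Fin.sum_univ_add] at this
    simp only [hv, Fin.append_left, Fin.append_right, Pi.smul_apply, smul_eq_mul] at this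
    rw [Pi.sub_apply]
    rw [← this]
    simp only [Matrix.mulVec, dotProduct]
    rw [← Finset.sum_sub_distrib]
    rw [← Finset.sum_add_distrib]
    refine Finset.sum_congr rfl fun j _ => by ring
  obtain ⟨p, hp1, hp2⟩ := myFarkas _ v d hnc
  refine ⟨p, fun j => ?_, fun j => ?_, hp2⟩
  · have := hp1 (Fin.castAdd n j)
    simp only [hv, Fin.append_left, dotProduct] at this
    exact this
  · have := hp1 (Fin.natAdd n j)
    simp only [hv, Fin.append_right, dotProduct] at this
    have h2 : (0:ℝ) ≤ ∑ i, -(C i j * p i) := by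
      refine le_trans this (le_of_eq ?_)
      exact Finset.sum_congr rfl fun i _ => by ring
    rw [Finset.sum_neg_distrib] at h2
    linarith

lemma dot_mulVec_eq {m n : ℕ} (p : Fin m → ℝ) (M : Matrix (Fin m) (Fin n) ℝ)
    (y : Fin n → ℝ) :
    ∑ i, p i * M.mulVec y i = ∑ j, (∑ i, M i j * p i) * y j := by
  simp only [Matrix.mulVec, dotProduct, Finset.mul_sum, Finset.sum_mul]
  rw [Finset.sum_comm]
  exact Finset.sum_congr rfl fun j _ => Finset.sum_congr rfl fun i _ => by ring

lemma abs_dot_le {m n : ℕ} (p : Fin m → ℝ) (E R : Matrix (Fin m) (Fin n) ℝ)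
    (x : Fin n → ℝ) (hE : ∀ i j, |E i j| ≤ R i j) (hx : ∀ j, 0 ≤ x j) :
    ∑ i, p i * E.mulVec x i ≤ ∑ i, |p i| * R.mulVec x i := by
  simp only [Matrix.mulVec, dotProduct, Finset.mul_sum]
  refine Finset.sum_le_sum fun i _ => Finset.sum_le_sum fun j _ => ?_
  have h1 : p i * E i j ≤ |p i| * R i j := by
    calc p i * E i j ≤ |p i * E i j| := le_abs_self _
      _ = |p i| * |E i j| := abs_mul _ _
      _ ≤ |p i| * R i j := mul_le_mul_of_nonneg_left (hE i j) (abs_nonneg _)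
  calc p i * (E i j * x j) = (p i * E i j) * x j := by ring
    _ ≤ (|p i| * R i j) * x j := mul_le_mul_of_nonneg_right h1 (hx j)
    _ = |p i| * (R i j * x j) := by ring

theorem strong_solvability_equations_iff {m n : ℕ}
    (Ac AΔ : Matrix (Fin m) (Fin n) ℝ) (bc bΔ : Fin m → ℝ)
    (hAΔ : ∀ i j, 0 ≤ AΔ i j) (hbΔ : ∀ i, 0 ≤ bΔ i) :
    (∀ A : Matrix (Fin m) (Fin n) ℝ, (∀ i j, |A i j - Ac i j| ≤ AΔ i j) →
     ∀ b : Fin m → ℝ, (∀ i, |b i - bc i| ≤ bΔ i) →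
      ∃ x : Fin n → ℝ, A.mulVec x = b)
    ↔
    (∀ s : Fin m → ℝ, (∀ i, s i = 1 ∨ s i = -1) →
      ∃ x1 x2 : Fin n → ℝ, (∀ j, 0 ≤ x1 j) ∧ (∀ j, 0 ≤ x2 j) ∧
        (Ac + Matrix.diagonal s * AΔ).mulVec x1
          - (Ac - Matrix.diagonal s * AΔ).mulVec x2
          = fun i => bc i - s i * bΔ i) := by
  constructor
  · -- strong solvability ⇒ sign systems solvable
    intro hstrong s hs
    by_contra hno
    obtain ⟨p, hp1, hp2, hp3⟩ := myKey (Ac + Matrix.diagonal s * AΔ)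
      (Ac - Matrix.diagonal s * AΔ) (fun i => bc i - s i * bΔ i) hno
    have habs1 : ∀ i, |s i| = 1 := by
      intro i; rcases hs i with h | h <;> simp [h]
    -- column quantities
    set uu : Fin n → ℝ := fun j => ∑ i, Ac i j * p i with huu
    set cc : Fin n → ℝ := fun j => ∑ i, s i * AΔ i j * p i with hcc
    have hsum1 : ∀ j, ∑ i, (Ac + Matrix.diagonal s * AΔ) i j * p i = uu j + cc j := by
      intro j
      rw [huu, hcc, ← Finset.sum_add_distrib]
      refine Finset.sum_congr rfl fun i _ => ?_
      simp [Matrix.add_apply, Matrix.diagonal_mul]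
      ring
    have hsum2 : ∀ j, ∑ i, (Ac - Matrix.diagonal s * AΔ) i j * p i = uu j - cc j := by
      intro j
      rw [huu, hcc, ← Finset.sum_sub_distrib]
      refine Finset.sum_congr rfl fun i _ => ?_
      simp [Matrix.sub_apply, Matrix.diagonal_mul]
      ring
    have habsu : ∀ j, |uu j| ≤ cc j := by
      intro j
      have h1 := hp1 j; rw [hsum1 j] at h1
      have h2 := hp2 j; rw [hsum2 j] at h2
      rw [abs_le]; constructor <;> linarith
    set t : Fin n → ℝ := fun j => if cc j = 0 then 0 else uu j / cc j with ht
    have habst : ∀ j, |t j| ≤ 1 := by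
      intro j
      simp only [ht]
      by_cases hcj : cc j = 0
      · simp [hcj]
      · have hccpos : 0 < cc j :=
          lt_of_le_of_ne (le_trans (abs_nonneg _) (habsu j)) (Ne.symm hcj)
        simp only [hcj, if_false]
        rw [abs_div, abs_of_pos hccpos, div_le_one hccpos]
        exact habsu j
    set A : Matrix (Fin m) (Fin n) ℝ := fun i j => Ac i j - t j * (s i * AΔ i j) with hA
    have hmem : ∀ i j, |A i j - Ac i j| ≤ AΔ i j := by
      intro i j
      rw [hA]
      simp only [sub_sub_cancel_left, abs_neg, abs_mul]
      calc |t j| * (|s i| * |AΔ i j|) ≤ 1 * (1 * |AΔ i j|) := by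
            refine mul_le_mul (habst j) ?_ (by positivity) zero_le_one
            refine mul_le_mul_of_nonneg_right (le_of_eq (habs1 i)) (abs_nonneg _)
        _ = AΔ i j := by rw [abs_of_nonneg (hAΔ i j)]; ring
    set b : Fin m → ℝ := fun i => bc i - s i * bΔ i with hb
    have hbmem : ∀ i, |b i - bc i| ≤ bΔ i := by
      intro i
      rw [hb]
      simp only [sub_sub_cancel_left, abs_neg, abs_mul, habs1 i, one_mul]
      rw [abs_of_nonneg (hbΔ i)]
    obtain ⟨x, hx⟩ := hstrong A hmem b hbmem
    have hAtp : ∀ j, ∑ i, A i j * p i = 0 := by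
      intro j
      have : ∑ i, A i j * p i = uu j - t j * cc j := by
        rw [hA, huu, hcc, Finset.mul_sum, ← Finset.sum_sub_distrib]
        refine Finset.sum_congr rfl fun i _ => by ring
      rw [this, ht]
      by_cases hcj : cc j = 0
      · have : uu j = 0 := by
          have := habsu j; rw [hcj] at this
          exact abs_eq_zero.mp (le_antisymm this (abs_nonneg _))
        simp [hcj, this]
      · simp only [hcj, if_false]
        field_simp
        ring
    have hzero : ∑ i, p i * b i = 0 := by
      rw [show (b : Fin m → ℝ) = A.mulVec x from hx.symm, dot_mulVec_eq]
      refine Finset.sum_eq_zero fun j _ => by rw [hAtp j, zero_mul]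
    have hneg : ∑ i, p i * b i < 0 := by
      refine lt_of_le_of_lt (le_of_eq ?_) hp3
      rw [dotProduct]
      exact Finset.sum_congr rfl fun i _ => by rw [hb]; ring
    linarith
  · -- sign systems solvable ⇒ strong solvability
    intro hsys A hA b hb
    by_contra hnox
    have h' : ¬ ∃ x1 x2 : Fin n → ℝ, (∀ j, 0 ≤ x1 j) ∧ (∀ j, 0 ≤ x2 j) ∧
        A.mulVec x1 - A.mulVec x2 = b := by
      rintro ⟨x1, x2, _, _, he⟩
      exact hnox ⟨x1 - x2, by rw [Matrix.mulVec_sub]; exact he⟩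
    obtain ⟨p, hp1, hp2, hp3⟩ := myKey A A b h'
    have hAp : ∀ j, ∑ i, A i j * p i = 0 := fun j => le_antisymm (hp2 j) (hp1 j)
    set s : Fin m → ℝ := fun i => if 0 ≤ p i then 1 else -1 with hsdef
    have hs : ∀ i, s i = 1 ∨ s i = -1 := by
      intro i; rw [hsdef]; by_cases h : 0 ≤ p i <;> simp [h]
    have hsp : ∀ i, s i * p i = |p i| := by
      intro i; rw [hsdef]
      by_cases h : 0 ≤ p i
      · simp [h, abs_of_nonneg h]
      · push_neg at h
        simp [not_le.mpr h, abs_of_neg h]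
    obtain ⟨x1, x2, hx1, hx2, heq⟩ := hsys s hs
    -- diagonal action
    have hdiag : ∀ (x : Fin n → ℝ) (i : Fin m),
        (Matrix.diagonal s * AΔ).mulVec x i = s i * AΔ.mulVec x i := by
      intro x i
      rw [← Matrix.mulVec_mulVec, Matrix.mulVec_diagonal]
    have hE : ∀ i j, |(A - Ac) i j| ≤ AΔ i j := by
      intro i j; simpa using hA i j
    -- lower bound on p · LHS
    have hL1 : ∑ i, p i * (A.mulVec x1) i ≤
        ∑ i, p i * ((Ac + Matrix.diagonal s * AΔ).mulVec x1) i := by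
      have h1 := abs_dot_le p (A - Ac) AΔ x1 hE hx1
      have e1 : ∀ i, (A.mulVec x1) i = (Ac.mulVec x1) i + ((A - Ac).mulVec x1) i := by
        intro i; rw [Matrix.sub_mulVec]; simp
      have e2 : ∀ i, ((Ac + Matrix.diagonal s * AΔ).mulVec x1) i
          = (Ac.mulVec x1) i + s i * (AΔ.mulVec x1) i := by
        intro i; rw [Matrix.add_mulVec]; simp [hdiag x1 i]
      calc ∑ i, p i * (A.mulVec x1) i
          = ∑ i, p i * (Ac.mulVec x1) i + ∑ i, p i * ((A - Ac).mulVec x1) i := by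
            rw [← Finset.sum_add_distrib]
            exact Finset.sum_congr rfl fun i _ => by rw [e1]; ring
        _ ≤ ∑ i, p i * (Ac.mulVec x1) i + ∑ i, |p i| * (AΔ.mulVec x1) i := by linarith
        _ = ∑ i, p i * ((Ac + Matrix.diagonal s * AΔ).mulVec x1) i := by
            rw [← Finset.sum_add_distrib]
            refine Finset.sum_congr rfl fun i _ => ?_
            rw [e2 i, ← hsp i]; ring
    have hL2 : ∑ i, p i * ((Ac - Matrix.diagonal s * AΔ).mulVec x2) i ≤
        ∑ i, p i * (A.mulVec x2) i := by
      have h1 := abs_dot_le (fun i => -p i) (A - Ac) AΔ x2 hE hx2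
      simp only [abs_neg] at h1
      have e1 : ∀ i, (A.mulVec x2) i = (Ac.mulVec x2) i + ((A - Ac).mulVec x2) i := by
        intro i; rw [Matrix.sub_mulVec]; simp
      have e2 : ∀ i, ((Ac - Matrix.diagonal s * AΔ).mulVec x2) i
          = (Ac.mulVec x2) i - s i * (AΔ.mulVec x2) i := by
        intro i; rw [Matrix.sub_mulVec]; simp [hdiag x2 i]
      have h1' : ∑ i, -(p i * ((A - Ac).mulVec x2) i) ≤ ∑ i, |p i| * (AΔ.mulVec x2) i := by
        refine le_trans (le_of_eq ?_) h1
        exact Finset.sum_congr rfl fun i _ => by ring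
      rw [Finset.sum_neg_distrib] at h1'
      calc ∑ i, p i * ((Ac - Matrix.diagonal s * AΔ).mulVec x2) i
          = ∑ i, p i * (Ac.mulVec x2) i - ∑ i, |p i| * (AΔ.mulVec x2) i := by
            rw [← Finset.sum_sub_distrib]
            refine Finset.sum_congr rfl fun i _ => ?_
            rw [e2 i, ← hsp i]; ring
        _ ≤ ∑ i, p i * (Ac.mulVec x2) i + ∑ i, p i * ((A - Ac).mulVec x2) i := by linarith
        _ = ∑ i, p i * (A.mulVec x2) i := by
            rw [← Finset.sum_add_distrib]
            exact Finset.sum_congr rfl fun i _ => by rw [e1]; ring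
    have hzero1 : ∑ i, p i * (A.mulVec x1) i = 0 := by
      rw [dot_mulVec_eq]
      exact Finset.sum_eq_zero fun j _ => by rw [hAp j, zero_mul]
    have hzero2 : ∑ i, p i * (A.mulVec x2) i = 0 := by
      rw [dot_mulVec_eq]
      exact Finset.sum_eq_zero fun j _ => by rw [hAp j, zero_mul]
    -- value of p · LHS = p · RHS
    have hLR : ∑ i, p i * ((Ac + Matrix.diagonal s * AΔ).mulVec x1) i
        - ∑ i, p i * ((Ac - Matrix.diagonal s * AΔ).mulVec x2) i
        = ∑ i, p i * (bc i - s i * bΔ i) := by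
      rw [← Finset.sum_sub_distrib]
      refine Finset.sum_congr rfl fun i _ => ?_
      have := congrFun heq i
      rw [Pi.sub_apply] at this
      rw [← mul_sub, this]
    -- upper bound on p · RHS
    have hRb : ∑ i, p i * (bc i - s i * bΔ i) ≤ ∑ i, p i * b i := by
      refine Finset.sum_le_sum fun i _ => ?_
      have h1 : -(|p i| * bΔ i) ≤ p i * (b i - bc i) := by
        have h2 : |p i * (b i - bc i)| ≤ |p i| * bΔ i := by
          rw [abs_mul]
          exact mul_le_mul_of_nonneg_left (hb i) (abs_nonneg _)
        linarith [neg_abs_le (p i * (b i - bc i))]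
      have h3 : p i * (bc i - s i * bΔ i) = p i * bc i - |p i| * bΔ i := by
        rw [← hsp i]; ring
      have h1' := h1
      rw [mul_sub] at h1'
      linarith [h1', h3]
    have hbneg : ∑ i, p i * b i < 0 := by
      refine lt_of_le_of_lt (le_of_eq ?_) hp3
      exact Finset.sum_congr rfl fun i _ => by ring
    linarith
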